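/- Let V : [0,∞) → ℝ be continuous, σ, λ, η ∈ ℝ, and let φ : [0,∞) → ℝ be a nonzero twice continuously differentiable function in L²(0,∞) satisfying −φ'' + Vφ = λφ on [0,∞) and φ'(0) = σφ(0). Set γ = −1/‖φ‖² and Φ(x) = 1 + γ∫₀ˣ φ(t)² dt, and assume Φ(x) > 0 for all x ≥ 0. Define V_λ(x) = V(x) − 2(d²/dx²) log Φ(x) and φ̃(x) = φ(x)/Φ(x). If ψ : [0,∞) → ℝ is twice continuously differentiable and satisfies −ψ'' + Vψ = ηψ on [0,∞) and ψ'(0) = σψ(0), then the function ψ_λ(x) = ψ(x) − γφ̃(x)∫₀ˣ ψ(t)φ(t) dt is twice continuously differentiable and satisfies −ψ_λ'' + V_λψ_λ = ηψ_λ on [0,∞) and the Robin boundary condition ψ_λ'(0) = σ_λψ_λ(0), where σ_λ = σ + |φ(0)|²/‖φ‖². -/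

import Mathlib

open MeasureTheory Set

/-- One-sided derivative on `[0, ∞)`. -/
noncomputable def D (f : ℝ → ℝ) : ℝ → ℝ := derivWithin f (Set.Ici 0)

private lemma hdcd {f : ℝ → ℝ} {s : Set ℝ} {a b x : ℝ}
    (h : HasDerivWithinAt f a s x) (hb : b = a) : HasDerivWithinAt f b s x := hb ▸ h

private lemma ftc_Ici {f : ℝ → ℝ} (hf : ContinuousOn f (Set.Ici 0)) {x : ℝ}
    (hx : x ∈ Set.Ici (0:ℝ)) :
    HasDerivWithinAt (fun u => ∫ t in (0:ℝ)..u, f t) (f x) (Set.Ici 0) x := by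
  have hx0 : (0:ℝ) ≤ x := hx
  have hint : IntervalIntegrable f volume 0 x :=
    (hf.mono (by rw [uIcc_of_le hx0]; exact Icc_subset_Ici_self)).intervalIntegrable
  have hm : AEStronglyMeasurable f (volume.restrict (Set.Ici (0:ℝ))) :=
    hf.aestronglyMeasurable measurableSet_Ici
  rcases eq_or_lt_of_le hx0 with h0 | h0
  · subst h0
    have hmeas : StronglyMeasurableAtFilter f (nhdsWithin 0 (Set.Ioi 0)) volume :=
      ⟨Set.Ici 0, Filter.mem_of_superset self_mem_nhdsWithin Set.Ioi_subset_Ici_self, hm⟩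
    exact intervalIntegral.integral_hasDerivWithinAt_right hint hmeas
      ((hf 0 Set.self_mem_Ici).mono Set.Ioi_subset_Ici_self)
  · have hmem : Set.Ici (0:ℝ) ∈ nhds x := Ici_mem_nhds h0
    have hmeas : StronglyMeasurableAtFilter f (nhds x) volume :=
      ⟨Set.Ici 0, hmem, hm⟩
    exact (intervalIntegral.integral_hasDerivAt_right hint hmeas
      (hf.continuousAt hmem)).hasDerivWithinAt

theorem double_commutation
    (V φ ψ : ℝ → ℝ) (σ lam η : ℝ)
    (hV : ContinuousOn V (Set.Ici 0))
    (hφ : ContDiffOn ℝ 2 φ (Set.Ici 0))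
    (hφne : ¬ ∀ᵐ x ∂(volume.restrict (Set.Ioi (0:ℝ))), φ x = 0)
    (hφL2 : MemLp φ 2 (volume.restrict (Set.Ioi (0:ℝ))))
    (hφode : ∀ x ∈ Set.Ici (0:ℝ), -(D (D φ) x) + V x * φ x = lam * φ x)
    (hφbc : D φ 0 = σ * φ 0)
    (γ : ℝ) (hγ : γ = -1 / (∫ x in Set.Ioi (0:ℝ), (φ x) ^ 2))
    (Φ : ℝ → ℝ) (hΦ : ∀ x, Φ x = 1 + γ * ∫ t in (0:ℝ)..x, (φ t) ^ 2)
    (hΦpos : ∀ x ∈ Set.Ici (0:ℝ), 0 < Φ x)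
    (Vlam : ℝ → ℝ) (hVlam : ∀ x ∈ Set.Ici (0:ℝ),
      Vlam x = V x - 2 * D (D (fun y => Real.log (Φ y))) x)
    (φt : ℝ → ℝ) (hφt : ∀ x, φt x = φ x / Φ x)
    (hψ : ContDiffOn ℝ 2 ψ (Set.Ici 0))
    (hψode : ∀ x ∈ Set.Ici (0:ℝ), -(D (D ψ) x) + V x * ψ x = η * ψ x)
    (hψbc : D ψ 0 = σ * ψ 0)
    (ψlam : ℝ → ℝ) (hψlam : ∀ x,
      ψlam x = ψ x - γ * φt x * ∫ t in (0:ℝ)..x, ψ t * φ t)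
    (σlam : ℝ) (hσlam : σlam = σ + (φ 0) ^ 2 / (∫ x in Set.Ioi (0:ℝ), (φ x) ^ 2)) :
    ContDiffOn ℝ 2 ψlam (Set.Ici 0) ∧
      (∀ x ∈ Set.Ici (0:ℝ), -(D (D ψlam) x) + Vlam x * ψlam x = η * ψlam x) ∧
      D ψlam 0 = σlam * ψlam 0 := by
  have hU : UniqueDiffOn ℝ (Set.Ici (0:ℝ)) := uniqueDiffOn_Ici 0
  have h12 : (1 : WithTop ℕ∞) ≤ 2 := by norm_num
  have hφc : ContinuousOn φ (Set.Ici 0) := hφ.continuousOn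
  have hψc : ContinuousOn ψ (Set.Ici 0) := hψ.continuousOn
  have hφ1 : ContDiffOn ℝ 1 φ (Set.Ici 0) := hφ.of_le h12
  have hψ1 : ContDiffOn ℝ 1 ψ (Set.Ici 0) := hψ.of_le h12
  have hDφ : ContDiffOn ℝ 1 (D φ) (Set.Ici 0) := hφ.derivWithin hU (by norm_num)
  have hDψ : ContDiffOn ℝ 1 (D ψ) (Set.Ici 0) := hψ.derivWithin hU (by norm_num)
  have hφd : ∀ x ∈ Set.Ici (0:ℝ), HasDerivWithinAt φ (D φ x) (Set.Ici 0) x :=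
    fun x hx => ((hφ1.differentiableOn one_ne_zero) x hx).hasDerivWithinAt
  have hψd : ∀ x ∈ Set.Ici (0:ℝ), HasDerivWithinAt ψ (D ψ x) (Set.Ici 0) x :=
    fun x hx => ((hψ1.differentiableOn one_ne_zero) x hx).hasDerivWithinAt
  have hφd2 : ∀ x ∈ Set.Ici (0:ℝ), HasDerivWithinAt (D φ) (D (D φ) x) (Set.Ici 0) x :=
    fun x hx => ((hDφ.differentiableOn one_ne_zero) x hx).hasDerivWithinAt
  have hψd2 : ∀ x ∈ Set.Ici (0:ℝ), HasDerivWithinAt (D ψ) (D (D ψ) x) (Set.Ici 0) x :=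
    fun x hx => ((hDψ.differentiableOn one_ne_zero) x hx).hasDerivWithinAt
  have ha2 : ∀ x ∈ Set.Ici (0:ℝ), D (D φ) x = V x * φ x - lam * φ x := by
    intro x hx; have := hφode x hx; linarith
  have hb2 : ∀ x ∈ Set.Ici (0:ℝ), D (D ψ) x = V x * ψ x - η * ψ x := by
    intro x hx; have := hψode x hx; linarith
  set G : ℝ → ℝ := fun x => ∫ t in (0:ℝ)..x, ψ t * φ t with hG_def
  have hGd : ∀ x ∈ Set.Ici (0:ℝ), HasDerivWithinAt G (ψ x * φ x) (Set.Ici 0) x :=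
    fun x hx => ftc_Ici (hψc.mul hφc) hx
  have hΦd : ∀ x ∈ Set.Ici (0:ℝ), HasDerivWithinAt Φ (γ * φ x ^ 2) (Set.Ici 0) x := by
    intro x hx
    have h1 := ((ftc_Ici (hφc.pow 2) hx).const_mul γ).const_add 1
    exact h1.congr (fun y _ => hΦ y) (hΦ x)
  have hΦne : ∀ x ∈ Set.Ici (0:ℝ), Φ x ≠ 0 := fun x hx => (hΦpos x hx).ne'
  -- the auxiliary functions
  set u : ℝ → ℝ := fun x => γ * G x / Φ x with hu_def
  set Nu : ℝ → ℝ := fun x => γ * (ψ x * φ x) * Φ x - γ * G x * (γ * φ x ^ 2) with hNu_def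
  set u1 : ℝ → ℝ := fun x => Nu x / Φ x ^ 2 with hu1_def
  have hud : ∀ x ∈ Set.Ici (0:ℝ), HasDerivWithinAt u (u1 x) (Set.Ici 0) x := fun x hx =>
    ((hGd x hx).const_mul γ).div (hΦd x hx) (hΦne x hx)
  set Nu' : ℝ → ℝ := fun x =>
    (γ * (D ψ x * φ x + ψ x * D φ x) * Φ x + γ * (ψ x * φ x) * (γ * φ x ^ 2))
      - (γ * (ψ x * φ x) * (γ * φ x ^ 2) + γ * G x * (γ * (2 * φ x * D φ x))) with hNu'_def
  have hNud : ∀ x ∈ Set.Ici (0:ℝ), HasDerivWithinAt Nu (Nu' x) (Set.Ici 0) x := by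
    intro x hx
    have h := ((((hψd x hx).mul (hφd x hx)).const_mul γ).mul (hΦd x hx)).sub
      (((hGd x hx).const_mul γ).mul (((hφd x hx).pow 2).const_mul γ))
    exact hdcd h (by simp only [hNu'_def, Pi.pow_apply, Pi.mul_apply]; push_cast; ring)
  set u2 : ℝ → ℝ := fun x =>
    (Nu' x * Φ x ^ 2 - Nu x * (2 * Φ x * (γ * φ x ^ 2))) / Φ x ^ 4 with hu2_def
  have hu1d : ∀ x ∈ Set.Ici (0:ℝ), HasDerivWithinAt u1 (u2 x) (Set.Ici 0) x := by
    intro x hx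
    have h := (hNud x hx).div ((hΦd x hx).pow 2) (pow_ne_zero 2 (hΦne x hx))
    exact hdcd h (by simp only [hu2_def, Pi.pow_apply, Pi.mul_apply]; push_cast; ring)
  have hψfun : ∀ y, ψlam y = ψ y - φ y * u y := by
    intro y
    rw [hψlam y, hφt y]
    simp only [hu_def, hG_def]
    ring
  set q1 : ℝ → ℝ := fun x => D ψ x - (D φ x * u x + φ x * u1 x) with hq1_def
  have hψlamd : ∀ x ∈ Set.Ici (0:ℝ), HasDerivWithinAt ψlam (q1 x) (Set.Ici 0) x :=
    fun x hx => ((hψd x hx).sub ((hφd x hx).mul (hud x hx))).congr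
      (fun y _ => hψfun y) (hψfun x)
  set q2 : ℝ → ℝ := fun x =>
    D (D ψ) x - ((D (D φ) x * u x + D φ x * u1 x) + (D φ x * u1 x + φ x * u2 x)) with hq2_def
  have hq1d : ∀ x ∈ Set.Ici (0:ℝ), HasDerivWithinAt q1 (q2 x) (Set.Ici 0) x := fun x hx =>
    (hψd2 x hx).sub (((hφd2 x hx).mul (hud x hx)).add ((hφd x hx).mul (hu1d x hx)))
  have hDψlam : ∀ x ∈ Set.Ici (0:ℝ), D ψlam x = q1 x := fun x hx =>
    (hψlamd x hx).derivWithin (hU x hx)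
  have hDq : ∀ y ∈ Set.Ici (0:ℝ), derivWithin ψlam (Set.Ici 0) y = q1 y := hDψlam
  have hDDψlam : ∀ x ∈ Set.Ici (0:ℝ), D (D ψlam) x = q2 x := by
    intro x hx
    show derivWithin (derivWithin ψlam (Set.Ici 0)) (Set.Ici 0) x = q2 x
    rw [derivWithin_congr (fun y hy => hDq y hy) (hDq x hx)]
    exact (hq1d x hx).derivWithin (hU x hx)
  -- log Φ derivatives
  set l1 : ℝ → ℝ := fun x => γ * φ x ^ 2 / Φ x with hl1_def
  have hlogd : ∀ x ∈ Set.Ici (0:ℝ),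
      HasDerivWithinAt (fun y => Real.log (Φ y)) (l1 x) (Set.Ici 0) x :=
    fun x hx => (hΦd x hx).log (hΦne x hx)
  set l2 : ℝ → ℝ := fun x =>
    (γ * (2 * φ x * D φ x) * Φ x - γ * φ x ^ 2 * (γ * φ x ^ 2)) / Φ x ^ 2 with hl2_def
  have hl1d : ∀ x ∈ Set.Ici (0:ℝ), HasDerivWithinAt l1 (l2 x) (Set.Ici 0) x := by
    intro x hx
    have h := (((hφd x hx).pow 2).const_mul γ).div (hΦd x hx) (hΦne x hx)
    exact hdcd h (by simp only [hl2_def, Pi.pow_apply, Pi.mul_apply]; push_cast; ring)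
  have hDDlog : ∀ x ∈ Set.Ici (0:ℝ), D (D (fun y => Real.log (Φ y))) x = l2 x := by
    intro x hx
    show derivWithin (derivWithin (fun y => Real.log (Φ y)) (Set.Ici 0)) (Set.Ici 0) x = l2 x
    rw [derivWithin_congr (fun y hy => (hlogd y hy).derivWithin (hU y hy))
      ((hlogd x hx).derivWithin (hU x hx))]
    exact (hl1d x hx).derivWithin (hU x hx)
  -- Wronskian identity
  set hw : ℝ → ℝ := fun x => (φ x * D ψ x - D φ x * ψ x) - (lam - η) * G x with hw_def
  have hhd : ∀ x ∈ Set.Ici (0:ℝ), HasDerivWithinAt hw 0 (Set.Ici 0) x := by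
    intro x hx
    have h := (((hφd x hx).mul (hψd2 x hx)).sub ((hφd2 x hx).mul (hψd x hx))).sub
      ((hGd x hx).const_mul (lam - η))
    exact hdcd h (by rw [ha2 x hx, hb2 x hx]; ring)
  have hconst : ∀ x ∈ Set.Ici (0:ℝ), hw x = hw 0 := by
    intro x hx
    refine Convex.is_const_of_fderivWithin_eq_zero (convex_Ici 0)
      (fun y hy => (hhd y hy).differentiableWithinAt) ?_ hx Set.self_mem_Ici
    intro y hy
    rw [(hhd y hy).hasFDerivWithinAt.fderivWithin (hU y hy)]
    exact ContinuousLinearMap.ext fun z => by simp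
  have hw0 : hw 0 = 0 := by
    simp only [hw_def, hG_def, intervalIntegral.integral_same, hφbc, hψbc]
    ring
  have hWr : ∀ x ∈ Set.Ici (0:ℝ),
      φ x * D ψ x - D φ x * ψ x = (lam - η) * G x := by
    intro x hx
    have h := hconst x hx
    rw [hw0] at h
    simp only [hw_def] at h
    linarith
  -- positivity of the norming integral
  have hsq : Integrable (fun x => φ x ^ 2) (volume.restrict (Set.Ioi (0:ℝ))) :=
    hφL2.integrable_sq
  have hne0 : (∫ x in Set.Ioi (0:ℝ), φ x ^ 2) ≠ 0 := by
    intro h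
    apply hφne
    have h2 := (integral_eq_zero_iff_of_nonneg
      (fun x => sq_nonneg (φ x)) hsq).mp h
    filter_upwards [h2] with x hx
    have : φ x ^ 2 = 0 := hx
    exact (pow_eq_zero_iff two_ne_zero).mp this
  have hσ : σlam = σ - γ * φ 0 ^ 2 := by
    rw [hσlam, hγ]
    field_simp
    ring
  -- smoothness
  have h2eq : (2 : WithTop ℕ∞) = 1 + 1 := by norm_num
  have hone : ¬((1 : WithTop ℕ∞) = (⊤ : WithTop ℕ∞)) := WithTop.one_ne_top
  have hGC : ContDiffOn ℝ 2 G (Set.Ici 0) := by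
    rw [h2eq, contDiffOn_succ_iff_derivWithin hU]
    refine ⟨fun x hx => (hGd x hx).differentiableWithinAt, fun h => absurd h hone, ?_⟩
    exact (hψ1.mul hφ1).congr (fun y hy => (hGd y hy).derivWithin (hU y hy))
  have hΦC : ContDiffOn ℝ 2 Φ (Set.Ici 0) := by
    have hFC : ContDiffOn ℝ 2 (fun x => ∫ t in (0:ℝ)..x, φ t ^ 2) (Set.Ici 0) := by
      rw [h2eq, contDiffOn_succ_iff_derivWithin hU]
      refine ⟨fun x hx => (ftc_Ici (hφc.pow 2) hx).differentiableWithinAt,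
        fun h => absurd h hone, ?_⟩
      exact (hφ1.pow 2).congr
        (fun y hy => (ftc_Ici (hφc.pow 2) hy).derivWithin (hU y hy))
    exact (contDiffOn_const.add (contDiffOn_const.mul hFC)).congr (fun y hy => hΦ y)
  have huC : ContDiffOn ℝ 2 u (Set.Ici 0) :=
    (contDiffOn_const.mul hGC).div hΦC (fun x hx => hΦne x hx)
  have hψlamC : ContDiffOn ℝ 2 ψlam (Set.Ici 0) :=
    (hψ.sub (hφ.mul huC)).congr (fun y hy => hψfun y)
  refine ⟨hψlamC, ?_, ?_⟩
  · intro x hx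
    rw [hDDψlam x hx, hVlam x hx, hDDlog x hx, hψfun x]
    have hP := hΦne x hx
    have hmain : -(q2 x) + (V x - 2 * l2 x) * (ψ x - φ x * u x)
        - η * (ψ x - φ x * u x)
        = γ * φ x / Φ x * ((φ x * D ψ x - D φ x * ψ x) - (lam - η) * G x) := by
      simp only [hq2_def, hl2_def, hu2_def, hu1_def, hNu'_def, hNu_def, hu_def]
      rw [ha2 x hx, hb2 x hx]
      field_simp
      ring
    rw [hWr x hx, sub_self, mul_zero] at hmain
    linarith
  · have h0m : (0:ℝ) ∈ Set.Ici (0:ℝ) := Set.self_mem_Ici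
    have hG0 : G 0 = 0 := intervalIntegral.integral_same
    have hΦ0 : Φ 0 = 1 := by rw [hΦ 0]; simp
    have hu0 : u 0 = 0 := by simp [hu_def, hG0]
    have hu10 : u1 0 = γ * (ψ 0 * φ 0) := by
      simp [hu1_def, hNu_def, hG0, hΦ0]
    have hψl0 : ψlam 0 = ψ 0 := by rw [hψfun 0, hu0]; ring
    rw [show D ψlam 0 = q1 0 from hDψlam 0 h0m]
    simp only [hq1_def]
    rw [hψbc, hu0, hu10, hψl0, hσ, hφbc]
    ring
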